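/- Fix an integer L ≥ 1. For ℓ ≥ 0 define V_ℓ = ∑_{q₁,…,q_ℓ ≥ 1} c_{L+q₁}·c_{q₁+q₂}⋯c_{q_{ℓ−1}+q_ℓ}·c_{q_ℓ} · C(L+q₁−1,q₁)·C(q₁+q₂−1,q₂)⋯C(q_{ℓ−1}+q_ℓ−1,q_ℓ), where c_s = 2∑_{n≥2} 2^{−n} n^{−s} (and V₀ = c_L). Then V_ℓ = A_{ℓ+1} − A_ℓ, where A_ℓ = ∑_{b₁,…,b_ℓ ≥ 2} 2^{ℓ−(b₁+⋯+b_ℓ)}[[b₁,…,b_ℓ]]^L and A₀ = 0. -/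

import Mathlib

open scoped BigOperators ENNReal

set_option maxHeartbeats 1000000

/-- Finite semi-regular continued fraction `[[b₁,…,b_m]] = 1/(b₁ - [[b₂,…,b_m]])`,
with the empty continued fraction equal to `0` (so `[[b]] = 1/b`). -/
noncomputable def srcf : List ℝ → ℝ
  | [] => 0
  | b :: t => 1 / (b - srcf t)

/-- `Aseq L ℓ = ∑_{b₁,…,b_ℓ ≥ 2} 2^{ℓ-(b₁+⋯+b_ℓ)} [[b₁,…,b_ℓ]]^L` (with `Aseq L 0 = 0`). -/
noncomputable def Aseq (L ℓ : ℕ) : ℝ :=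
  ∑' b : Fin ℓ → {n : ℕ // 2 ≤ n},
    (2 : ℝ) ^ ((ℓ : ℤ) - ∑ i, ((b i : ℕ) : ℤ)) *
      (srcf (List.ofFn fun i => ((b i : ℕ) : ℝ))) ^ L

/-- `c_s = 2·∑_{n≥2} 2^{−n} n^{−s}`. -/
noncomputable def cseq (s : ℕ) : ℝ := 2 * ∑' n : ℕ, 1 / (2 ^ (n + 2) * ((n : ℝ) + 2) ^ s)

/-- The exponent sequence `e 0 = L`, `e i = q_i` for `1 ≤ i ≤ ℓ` (and `0` beyond). -/
def eSeq (L : ℕ) {ℓ : ℕ} (q : Fin ℓ → {n : ℕ // 1 ≤ n}) (i : ℕ) : ℕ :=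
  if i = 0 then L else if h : i - 1 < ℓ then (q ⟨i - 1, h⟩ : ℕ) else 0

lemma srcf_mem (l : List ℝ) (h : ∀ x ∈ l, (2:ℝ) ≤ x) : 0 ≤ srcf l ∧ srcf l < 1 := by
  induction l with
  | nil => simp [srcf]
  | cons b t ih =>
    have h2 : (2:ℝ) ≤ b := h b List.mem_cons_self
    obtain ⟨h0, h1⟩ := ih (fun x hx => h x (List.mem_cons_of_mem _ hx))
    have hpos : (1:ℝ) < b - srcf t := by linarith
    constructor
    · simp only [srcf]
      positivity
    · simp only [srcf]
      rw [div_lt_one (by linarith)]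
      linarith

def e1 : ℕ ≃ {n : ℕ // 1 ≤ n} where
  toFun n := ⟨n + 1, by omega⟩
  invFun b := (b : ℕ) - 1
  left_inv n := by simp
  right_inv b := by ext; have := b.2; simp; omega

def e2 : ℕ ≃ {n : ℕ // 2 ≤ n} where
  toFun n := ⟨n + 2, by omega⟩
  invFun b := (b : ℕ) - 2
  left_inv n := by simp
  right_inv b := by ext; have := b.2; simp; omega

noncomputable def wt (b : ℕ) : ℝ≥0∞ := 2 ^ ((1:ℤ) - (b:ℤ))

lemma wt_ne_top (b : ℕ) : wt b ≠ ∞ := by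
  simp [wt]
  exact (ENNReal.zpow_lt_top (by norm_num) (by norm_num) _).ne

lemma wt_sum : ∑' b : {n : ℕ // 2 ≤ n}, wt b = 1 := by
  rw [← e2.tsum_eq]
  have : ∀ n : ℕ, wt (e2 n) = (2 : ℝ≥0∞)⁻¹ * (2⁻¹) ^ n := by
    intro n
    simp only [e2, Equiv.coe_fn_mk, wt]
    rw [show (1:ℤ) - ((n:ℕ)+2 : ℕ) = -(n+1) by push_cast; ring]
    rw [ENNReal.zpow_neg]
    rw [show ((n:ℤ)+1) = ((n+1 : ℕ) : ℤ) by push_cast; ring, zpow_natCast]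
    rw [pow_succ, ENNReal.mul_inv (by norm_num) (by norm_num), mul_comm,
      ENNReal.inv_pow]
  rw [tsum_congr this, ENNReal.tsum_mul_left, ENNReal.tsum_geometric]
  rw [show (1 : ℝ≥0∞) - 2⁻¹ = 2⁻¹ by
    rw [ENNReal.sub_eq_of_eq_add (by norm_num)]; rw [ENNReal.inv_two_add_inv_two] ]
  rw [inv_inv, ENNReal.inv_mul_cancel (by norm_num) (by norm_num)]

noncomputable def ce (s : ℕ) : ℝ≥0∞ :=
  ∑' b : {n : ℕ // 2 ≤ n}, wt b * (((b : ℕ) : ℝ≥0∞))⁻¹ ^ s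

noncomputable def Ae (L ℓ : ℕ) : ℝ≥0∞ :=
  ∑' b : Fin ℓ → {n : ℕ // 2 ≤ n},
    (∏ i, wt (b i)) * ENNReal.ofReal (srcf (List.ofFn fun i => ((b i : ℕ) : ℝ))) ^ L

noncomputable def Ve (L ℓ : ℕ) : ℝ≥0∞ :=
  ∑' q : Fin ℓ → {n : ℕ // 1 ≤ n},
    (∏ i ∈ Finset.range ℓ,
      ce (eSeq L q i + eSeq L q (i + 1)) *
        ((eSeq L q i + eSeq L q (i + 1) - 1).choose (eSeq L q (i + 1)) : ℝ≥0∞)) *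
      ce (eSeq L q ℓ)

lemma tsum_unique {ι : Type*} [Unique ι] (f : ι → ℝ≥0∞) : ∑' i, f i = f default :=
  tsum_eq_single default (fun b hb => absurd (Subsingleton.elim b default) hb)

lemma ce_le_one (s : ℕ) : ce s ≤ 1 := by
  rw [← wt_sum]
  refine ENNReal.tsum_le_tsum fun b => ?_
  have : (((b : ℕ) : ℝ≥0∞))⁻¹ ^ s ≤ 1 := by
    apply pow_le_one' (ENNReal.inv_le_one.2 (by exact_mod_cast Nat.one_le_iff_ne_zero.2 (by omega)))
  calc wt b * (((b : ℕ) : ℝ≥0∞))⁻¹ ^ s ≤ wt b * 1 := by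
        exact mul_le_mul_right this _
    _ = wt b := mul_one _

lemma ce_ne_top (s : ℕ) : ce s ≠ ∞ := (lt_of_le_of_lt (ce_le_one s) (by norm_num)).ne

lemma tsum_consEquiv {α : Type*} {ℓ : ℕ} (f : (Fin (ℓ+1) → α) → ℝ≥0∞) :
    ∑' b, f b = ∑' (x : α), ∑' (t : Fin ℓ → α), f (Fin.cons x t) := by
  rw [← (Fin.consEquiv fun _ => α).tsum_eq, ← ENNReal.tsum_prod]
  rfl

lemma srcf_ofFn_mem {ℓ : ℕ} (b : Fin ℓ → {n : ℕ // 2 ≤ n}) :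
    0 ≤ srcf (List.ofFn fun i => ((b i : ℕ) : ℝ)) ∧
      srcf (List.ofFn fun i => ((b i : ℕ) : ℝ)) < 1 := by
  apply srcf_mem
  intro x hx
  rw [List.mem_ofFn] at hx
  obtain ⟨i, rfl⟩ := hx
  show (2:ℝ) ≤ ((b i : ℕ) : ℝ)
  exact_mod_cast (b i).2

lemma prod_wt_sum (ℓ : ℕ) : ∑' b : Fin ℓ → {n : ℕ // 2 ≤ n}, ∏ i, wt (b i) = 1 := by
  induction ℓ with
  | zero => rw [tsum_unique]; simp
  | succ ℓ ih =>
    rw [tsum_consEquiv]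
    have h : ∀ (x : {n : ℕ // 2 ≤ n}) (t : Fin ℓ → {n : ℕ // 2 ≤ n}),
        (∏ i, wt (((Fin.cons x t : Fin (ℓ+1) → {n : ℕ // 2 ≤ n}) i : ℕ)))
          = wt x * ∏ i, wt (t i) := by
      intro x t
      rw [Fin.prod_univ_succ]
      simp
    have h2 : ∀ x : {n : ℕ // 2 ≤ n}, (∑' t : Fin ℓ → {n : ℕ // 2 ≤ n},
        ∏ i, wt (((Fin.cons x t : Fin (ℓ+1) → {n : ℕ // 2 ≤ n}) i : ℕ))) = wt x := by
      intro x
      rw [tsum_congr (h x), ENNReal.tsum_mul_left, ih, mul_one]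
    rw [tsum_congr h2, wt_sum]

lemma Ae_le_one (L ℓ : ℕ) : Ae L ℓ ≤ 1 := by
  rw [← prod_wt_sum ℓ]
  refine ENNReal.tsum_le_tsum fun b => ?_
  have h1 : ENNReal.ofReal (srcf (List.ofFn fun i => ((b i : ℕ) : ℝ))) ^ L ≤ 1 := by
    apply pow_le_one'
    exact ENNReal.ofReal_le_one.2 (srcf_ofFn_mem b).2.le
  calc (∏ i, wt (b i)) * _ ≤ (∏ i, wt (b i)) * 1 := mul_le_mul_right h1 _
    _ = _ := mul_one _

lemma Ae_ne_top (L ℓ : ℕ) : Ae L ℓ ≠ ∞ := (lt_of_le_of_lt (Ae_le_one L ℓ) (by norm_num)).ne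

lemma Ae_zero (ℓ : ℕ) : Ae 0 ℓ = 1 := by
  rw [Ae, ← prod_wt_sum ℓ]
  exact tsum_congr fun b => by simp

lemma Ae_zero_len (L : ℕ) (hL : 1 ≤ L) : Ae L 0 = 0 := by
  rw [Ae, tsum_unique]
  simp [srcf, zero_pow (by omega : L ≠ 0)]

lemma binom_real (L : ℕ) (hL : 1 ≤ L) {b x : ℝ} (hb : 2 ≤ b) (hx0 : 0 ≤ x) (hx1 : x < 1) :
    HasSum (fun q : ℕ => ((L + q - 1).choose q : ℝ) * x ^ q * (b⁻¹) ^ (L + q))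
      ((1/(b - x))^L) := by
  have hb0 : (0:ℝ) < b := by linarith
  have hr0 : 0 ≤ x / b := div_nonneg hx0 hb0.le
  have hr1 : x / b < 1 := by
    rw [div_lt_one hb0]; linarith
  have hr : ‖x / b‖ < 1 := by rw [Real.norm_eq_abs, abs_of_nonneg hr0]; exact hr1
  have H := (hasSum_choose_mul_geometric_of_norm_lt_one (L - 1) hr).mul_left ((b⁻¹) ^ L)
  have hsum : (b⁻¹) ^ L * (1 / (1 - x / b) ^ (L - 1 + 1)) = (1/(b - x))^L := by
    rw [Nat.sub_add_cancel hL]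
    rw [show (1:ℝ) - x / b = (b - x) / b by field_simp]
    have hbx : (0:ℝ) < b - x := by linarith
    rw [div_pow, one_div, div_pow, one_pow]
    field_simp
    rw [← mul_pow, one_div, inv_mul_cancel₀ hb0.ne', one_pow]
  rw [hsum] at H
  convert H using 2 with q
  · rfl
  have hch : (L + q - 1).choose q = (q + (L - 1)).choose (L - 1) := by
    have h3 := Nat.choose_symm (Nat.le_add_left (L-1) q)
    rw [show q + (L-1) - (L-1) = q from by omega] at h3
    rw [show L + q - 1 = q + (L-1) from by omega]
    exact h3
  rw [hch]
  rw [pow_add, div_eq_mul_inv, mul_pow]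
  ring

lemma binom_ennreal (L : ℕ) (hL : 1 ≤ L) {b : ℕ} (hb : 2 ≤ b) {x : ℝ}
    (hx0 : 0 ≤ x) (hx1 : x < 1) :
    ENNReal.ofReal x ^ 0 = 1 := by simp

lemma binom_ennreal' (L : ℕ) (hL : 1 ≤ L) {b : ℕ} (hb : 2 ≤ b) {x : ℝ}
    (hx0 : 0 ≤ x) (hx1 : x < 1) :
    ENNReal.ofReal ((1/((b:ℝ) - x))^L)
      = ∑' q : ℕ, ((L + q - 1).choose q : ℝ≥0∞) * ENNReal.ofReal x ^ q
          * (((b:ℕ) : ℝ≥0∞))⁻¹ ^ (L + q) := by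
  have hb2 : (2:ℝ) ≤ (b:ℝ) := by exact_mod_cast hb
  have hbpos : (0:ℝ) < (b:ℝ) := by linarith
  have H := binom_real L hL hb2 hx0 hx1
  rw [← H.tsum_eq]
  rw [ENNReal.ofReal_tsum_of_nonneg (fun q => by positivity) H.summable]
  refine tsum_congr fun q => ?_
  rw [ENNReal.ofReal_mul (by positivity), ENNReal.ofReal_mul (by positivity)]
  rw [ENNReal.ofReal_natCast, ENNReal.ofReal_pow hx0]
  rw [ENNReal.ofReal_pow (by positivity), ENNReal.ofReal_inv_of_pos hbpos,
    ENNReal.ofReal_natCast]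

lemma Ae_succ (L : ℕ) (hL : 1 ≤ L) (ℓ : ℕ) :
    Ae L (ℓ+1) = ce L + ∑' q : {n : ℕ // 1 ≤ n},
      ((L + (q:ℕ) - 1).choose (q:ℕ) : ℝ≥0∞) * ce (L + (q:ℕ)) * Ae (q:ℕ) ℓ := by
  classical
  set S := fun t : Fin ℓ → {n : ℕ // 2 ≤ n} => srcf (List.ofFn fun i => ((t i : ℕ) : ℝ))
    with hS
  have hsplit : Ae L (ℓ+1) = ∑' x : {n : ℕ // 2 ≤ n}, ∑' t : Fin ℓ → {n : ℕ // 2 ≤ n},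
      (wt x * ∏ i, wt (t i)) * ENNReal.ofReal (1/(((x:ℕ):ℝ) - S t)) ^ L := by
    rw [Ae, tsum_consEquiv]
    refine tsum_congr fun x => tsum_congr fun t => ?_
    congr 1
    · rw [Fin.prod_univ_succ]
      simp
    · congr 2
      rw [List.ofFn_succ]
      simp only [Fin.cons_zero, Fin.cons_succ]
      simp [srcf, hS]
  have step2 : ∀ (x : {n : ℕ // 2 ≤ n}) (t : Fin ℓ → {n : ℕ // 2 ≤ n}),
      (wt x * ∏ i, wt (t i)) * ENNReal.ofReal (1/(((x:ℕ):ℝ) - S t)) ^ L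
        = ∑' q : ℕ, (((L + q - 1).choose q : ℝ≥0∞)
            * (wt x * ((((x:ℕ)):ℝ≥0∞))⁻¹ ^ (L+q)))
            * ((∏ i, wt (t i)) * ENNReal.ofReal (S t) ^ q) := by
    intro x t
    obtain ⟨h0, h1⟩ := srcf_ofFn_mem t
    have hxg : (2:ℝ) ≤ ((x:ℕ):ℝ) := by exact_mod_cast x.2
    have hpos : (0:ℝ) < ((x:ℕ):ℝ) - S t := by
      have : S t < 1 := h1
      linarith
    have hnn : (0:ℝ) ≤ 1/(((x:ℕ):ℝ) - S t) := by positivity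
    rw [← ENNReal.ofReal_pow hnn, binom_ennreal' L hL x.2 h0 h1, ← ENNReal.tsum_mul_left]
    refine tsum_congr fun q => ?_
    ring
  calc Ae L (ℓ+1)
      = ∑' (x : {n : ℕ // 2 ≤ n}) (t : Fin ℓ → {n : ℕ // 2 ≤ n}) (q : ℕ),
          (((L + q - 1).choose q : ℝ≥0∞) * (wt x * ((((x:ℕ)):ℝ≥0∞))⁻¹ ^ (L+q)))
            * ((∏ i, wt (t i)) * ENNReal.ofReal (S t) ^ q) := by
        rw [hsplit]
        exact tsum_congr fun x => tsum_congr fun t => step2 x t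
    _ = ∑' (x : {n : ℕ // 2 ≤ n}) (q : ℕ) (t : Fin ℓ → {n : ℕ // 2 ≤ n}),
          (((L + q - 1).choose q : ℝ≥0∞) * (wt x * ((((x:ℕ)):ℝ≥0∞))⁻¹ ^ (L+q)))
            * ((∏ i, wt (t i)) * ENNReal.ofReal (S t) ^ q) :=
        tsum_congr fun x => ENNReal.tsum_comm
    _ = ∑' (q : ℕ) (x : {n : ℕ // 2 ≤ n}) (t : Fin ℓ → {n : ℕ // 2 ≤ n}),
          (((L + q - 1).choose q : ℝ≥0∞) * (wt x * ((((x:ℕ)):ℝ≥0∞))⁻¹ ^ (L+q)))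
            * ((∏ i, wt (t i)) * ENNReal.ofReal (S t) ^ q) :=
        ENNReal.tsum_comm
    _ = ∑' q : ℕ, ((L + q - 1).choose q : ℝ≥0∞) * ce (L + q) * Ae q ℓ := by
        refine tsum_congr fun q => ?_
        calc ∑' (x : {n : ℕ // 2 ≤ n}) (t : Fin ℓ → {n : ℕ // 2 ≤ n}),
              (((L + q - 1).choose q : ℝ≥0∞) * (wt x * ((((x:ℕ)):ℝ≥0∞))⁻¹ ^ (L+q)))
                * ((∏ i, wt (t i)) * ENNReal.ofReal (S t) ^ q)
            = ∑' (x : {n : ℕ // 2 ≤ n}),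
              (((L + q - 1).choose q : ℝ≥0∞) * (wt x * ((((x:ℕ)):ℝ≥0∞))⁻¹ ^ (L+q)))
                * Ae q ℓ := by
              refine tsum_congr fun x => ?_
              rw [ENNReal.tsum_mul_left, Ae]
          _ = (∑' (x : {n : ℕ // 2 ≤ n}),
              ((L + q - 1).choose q : ℝ≥0∞) * (wt x * ((((x:ℕ)):ℝ≥0∞))⁻¹ ^ (L+q))) * Ae q ℓ := by
              rw [ENNReal.tsum_mul_right]
          _ = ((L + q - 1).choose q : ℝ≥0∞) * ce (L + q) * Ae q ℓ := by
              rw [ENNReal.tsum_mul_left, ce]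
    _ = ce L + ∑' q : {n : ℕ // 1 ≤ n},
          ((L + (q:ℕ) - 1).choose (q:ℕ) : ℝ≥0∞) * ce (L + (q:ℕ)) * Ae (q:ℕ) ℓ := by
        rw [tsum_eq_zero_add' ENNReal.summable]
        congr 1
        · simp [Ae_zero]
        · rw [← e1.tsum_eq]
          rfl

lemma eSeq_zero {ℓ : ℕ} (L : ℕ) (q : Fin ℓ → {n : ℕ // 1 ≤ n}) : eSeq L q 0 = L := by
  simp [eSeq]

lemma eSeq_cons {ℓ : ℕ} (L : ℕ) (q0 : {n : ℕ // 1 ≤ n}) (t : Fin ℓ → {n : ℕ // 1 ≤ n})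
    (i : ℕ) : eSeq L (Fin.cons q0 t) (i + 1) = eSeq (q0 : ℕ) t i := by
  cases i with
  | zero => simp [eSeq]
  | succ j =>
    by_cases h : j < ℓ
    · have h1 : j + 1 + 1 - 1 < ℓ + 1 := by omega
      have h2 : j + 1 - 1 < ℓ := by omega
      simp only [eSeq, if_neg (by omega : ¬ j + 1 + 1 = 0), if_neg (by omega : ¬ j + 1 = 0),
        dif_pos h1, dif_pos h2]
      have : (⟨j + 1 + 1 - 1, h1⟩ : Fin (ℓ+1)) = Fin.succ ⟨j + 1 - 1, h2⟩ := by
        ext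
        simp
      rw [this, Fin.cons_succ]
    · simp only [eSeq, if_neg (by omega : ¬ j + 1 + 1 = 0), if_neg (by omega : ¬ j + 1 = 0),
        dif_neg (by omega : ¬ j + 1 + 1 - 1 < ℓ + 1), dif_neg (by omega : ¬ j + 1 - 1 < ℓ)]

lemma Ve_zero (L : ℕ) : Ve L 0 = ce L := by
  rw [Ve, tsum_unique]
  simp [eSeq]

lemma Ve_succ (L ℓ : ℕ) :
    Ve L (ℓ+1) = ∑' q0 : {n : ℕ // 1 ≤ n},
      (ce (L + (q0:ℕ)) * ((L + (q0:ℕ) - 1).choose (q0:ℕ) : ℝ≥0∞)) * Ve (q0:ℕ) ℓ := by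
  rw [Ve, tsum_consEquiv]
  refine tsum_congr fun q0 => ?_
  rw [Ve, ← ENNReal.tsum_mul_left]
  refine tsum_congr fun t => ?_
  rw [Finset.prod_range_succ']
  have he : ∀ i, eSeq L (Fin.cons q0 t) (i+1) = eSeq (q0:ℕ) t i := fun i => eSeq_cons L q0 t i
  have he1 : eSeq L (Fin.cons q0 t) 1 = (q0:ℕ) := by
    simpa [eSeq_zero] using he 0
  simp only [he, eSeq_zero, he1]
  ring

lemma main_enn (ℓ : ℕ) : ∀ L, 1 ≤ L → Ve L ℓ + Ae L ℓ = Ae L (ℓ+1) := by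
  induction ℓ with
  | zero =>
    intro L hL
    rw [Ve_zero, Ae_zero_len L hL, add_zero, Ae_succ L hL 0]
    have h : ∀ q : {n : ℕ // 1 ≤ n},
        ((L + (q:ℕ) - 1).choose (q:ℕ) : ℝ≥0∞) * ce (L + (q:ℕ)) * Ae (q:ℕ) 0 = 0 :=
      fun q => by rw [Ae_zero_len _ q.2, mul_zero]
    rw [tsum_congr h, tsum_zero, add_zero]
  | succ ℓ ih =>
    intro L hL
    rw [Ve_succ, Ae_succ L hL ℓ, Ae_succ L hL (ℓ+1)]
    rw [add_left_comm]
    congr 1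
    rw [← ENNReal.tsum_add]
    refine tsum_congr fun q => ?_
    rw [← ih (q:ℕ) q.2]
    ring

lemma toReal_zpow2 (n : ℤ) : ((2:ℝ≥0∞) ^ n).toReal = (2:ℝ) ^ n := by
  cases n with
  | ofNat k => rw [Int.ofNat_eq_coe, zpow_natCast, zpow_natCast, ENNReal.toReal_pow]; norm_num
  | negSucc k =>
    rw [zpow_negSucc, zpow_negSucc, ENNReal.toReal_inv, ENNReal.toReal_pow]
    norm_num

lemma prod_zpow2 {ι : Type*} (s : Finset ι) (f : ι → ℤ) :
    ∏ i ∈ s, (2:ℝ) ^ f i = 2 ^ (∑ i ∈ s, f i) := by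
  classical
  induction s using Finset.cons_induction with
  | empty => simp
  | cons a s ha ih =>
    rw [Finset.prod_cons, Finset.sum_cons, zpow_add₀ (by norm_num : (2:ℝ) ≠ 0), ih]

lemma cseq_eq (s : ℕ) : cseq s = (ce s).toReal := by
  rw [ce, ← e2.tsum_eq, ENNReal.tsum_toReal_eq (fun n => by
    refine ENNReal.mul_ne_top (wt_ne_top _) ?_
    exact ENNReal.pow_ne_top (ENNReal.inv_ne_top.2 (by
      simp only [e2, Equiv.coe_fn_mk]
      positivity))) ]
  rw [cseq, ← tsum_mul_left]
  refine tsum_congr fun n => ?_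
  simp only [e2, Equiv.coe_fn_mk]
  rw [ENNReal.toReal_mul, wt, toReal_zpow2, ENNReal.toReal_pow, ENNReal.toReal_inv]
  rw [show (((n + 2 : ℕ) : ℝ≥0∞)).toReal = ((n:ℝ) + 2) by rw [ENNReal.toReal_natCast]; push_cast; ring]
  rw [show ((1:ℤ) - ((n + 2 : ℕ) : ℤ)) = -(n+1) by push_cast; ring]
  rw [zpow_neg, show ((n:ℤ)+1) = ((n+1:ℕ):ℤ) by push_cast; ring, zpow_natCast]
  rw [inv_pow, ← one_div, ← one_div, div_mul_div_comm, one_mul]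
  rw [eq_div_iff (by positivity)]
  have h2 : ((n:ℝ)+2) ^ s ≠ 0 := by positivity
  field_simp
  ring

lemma Aseq_eq (L ℓ : ℕ) : Aseq L ℓ = (Ae L ℓ).toReal := by
  rw [Ae, ENNReal.tsum_toReal_eq (fun b => by
    refine ENNReal.mul_ne_top ?_ (ENNReal.pow_ne_top ENNReal.ofReal_ne_top)
    exact (ENNReal.prod_lt_top (fun i _ => (wt_ne_top _).lt_top)).ne)]
  rw [Aseq]
  refine tsum_congr fun b => ?_
  rw [ENNReal.toReal_mul, ENNReal.toReal_pow, ENNReal.toReal_ofReal (srcf_ofFn_mem b).1]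
  congr 1
  rw [ENNReal.toReal_prod]
  have h1 : ∀ i : Fin ℓ, (wt ((b i : ℕ))).toReal = (2:ℝ) ^ ((1:ℤ) - ((b i : ℕ) : ℤ)) :=
    fun i => by rw [wt, toReal_zpow2]
  rw [Finset.prod_congr rfl (fun i _ => h1 i), prod_zpow2]
  congr 1
  rw [Finset.sum_sub_distrib, Finset.sum_const, Finset.card_univ, Fintype.card_fin]
  push_cast
  ring

lemma V_eq (L ℓ : ℕ) :
    (∑' q : Fin ℓ → {n : ℕ // 1 ≤ n},
      (∏ i ∈ Finset.range ℓ,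
        cseq (eSeq L q i + eSeq L q (i + 1)) *
          ((eSeq L q i + eSeq L q (i + 1) - 1).choose (eSeq L q (i + 1)) : ℝ)) *
        cseq (eSeq L q ℓ)) = (Ve L ℓ).toReal := by
  rw [Ve, ENNReal.tsum_toReal_eq (fun q => by
    refine ENNReal.mul_ne_top ?_ (ce_ne_top _)
    refine (ENNReal.prod_lt_top (fun i _ => ?_)).ne
    exact ((ENNReal.mul_ne_top (ce_ne_top _) (ENNReal.natCast_ne_top _))).lt_top)]
  refine tsum_congr fun q => ?_
  rw [ENNReal.toReal_mul, ENNReal.toReal_prod, ← cseq_eq]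
  congr 1
  refine Finset.prod_congr rfl fun i _ => ?_
  rw [ENNReal.toReal_mul, ← cseq_eq, ENNReal.toReal_natCast]


/-- `V_ℓ = ∑_{q₁,…,q_ℓ ≥ 1} c_{L+q₁} c_{q₁+q₂} ⋯ c_{q_{ℓ−1}+q_ℓ} c_{q_ℓ} ·
C(L+q₁−1,q₁) ⋯ C(q_{ℓ−1}+q_ℓ−1,q_ℓ) = A_{ℓ+1} − A_ℓ`. -/
theorem V_eq_A_diff (L : ℕ) (hL : 1 ≤ L) (ℓ : ℕ) :
    ∑' q : Fin ℓ → {n : ℕ // 1 ≤ n},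
      (∏ i ∈ Finset.range ℓ,
        cseq (eSeq L q i + eSeq L q (i + 1)) *
          ((eSeq L q i + eSeq L q (i + 1) - 1).choose (eSeq L q (i + 1)) : ℝ)) *
        cseq (eSeq L q ℓ)
      = Aseq L (ℓ + 1) - Aseq L ℓ := by
  have h := main_enn ℓ L hL
  have hVe : Ve L ℓ ≠ ∞ := by
    have h2 : Ve L ℓ ≤ Ae L (ℓ+1) := h ▸ self_le_add_right _ _
    exact (lt_of_le_of_lt h2 (lt_of_le_of_lt (Ae_le_one _ _) (by norm_num))).ne
  have h3 := congrArg ENNReal.toReal h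
  rw [ENNReal.toReal_add hVe (Ae_ne_top _ _)] at h3
  rw [V_eq, Aseq_eq, Aseq_eq]
  linarith [h3]
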